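/- Let σ : [ε,1] → H be a C¹ curve in a Hilbert space with ∫_ε^1 |σ'(r) + (1/r) A σ(r)|² dr ≤ Λ and ∫_ε^1 |σ(r)|² dr ≤ 1, where A is self-adjoint with spectrum in (−∞, −n/2]. Then for every r ∈ [ε,1], (1/r)⟨σ(r), −Aσ(r)⟩ ≤ Λ whenever σ(1) = 0 and ⟨σ, (A+A²)σ⟩ ≥ 0 pointwise. -/

import Mathlib

open RealInnerProductSpace intervalIntegral

/-- Boundary control for a curve in a Hilbert space: if `A` is self-adjoint with
quadratic form `⟪Ax,x⟫ ≤ −(n/2)‖x‖²` (spectrum in `(−∞, −n/2]`),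
`∫_ε^1 ‖σ' + (1/r)Aσ‖² ≤ Λ`, `∫_ε^1 ‖σ‖² ≤ 1`, `σ(1) = 0` and
`⟪σ, (A+A²)σ⟫ ≥ 0` pointwise, then `(1/r)⟪σ(r), −Aσ(r)⟫ ≤ Λ` on `[ε,1]`. -/
theorem stmt9 {H : Type*} [NormedAddCommGroup H] [InnerProductSpace ℝ H] [CompleteSpace H]
    (A : H →L[ℝ] H) (hA : IsSelfAdjoint A) (n : ℕ) (hn : 1 ≤ n)
    (hspec : ∀ x : H, ⟪A x, x⟫ ≤ -((n : ℝ) / 2) * ‖x‖ ^ 2)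
    (ε Λ : ℝ) (hε : 0 < ε) (hε1 : ε < 1)
    (σ σ' : ℝ → H)
    (hderiv : ∀ r ∈ Set.Icc ε 1, HasDerivAt σ (σ' r) r)
    (hcont : ContinuousOn σ' (Set.Icc ε 1))
    (hq : ∫ r in ε..1, ‖σ' r + (1 / r) • A (σ r)‖ ^ 2 ≤ Λ)
    (hL2 : ∫ r in ε..1, ‖σ r‖ ^ 2 ≤ 1)
    (hb : σ 1 = 0)
    (hpos : ∀ x : H, 0 ≤ ⟪x, A x + A (A x)⟫) :
    ∀ r ∈ Set.Icc ε 1, (1 / r) * ⟪σ r, -A (σ r)⟫ ≤ Λ := by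
  intro r₀ hr₀
  have hsym : ∀ x y : H, ⟪A x, y⟫ = ⟪x, A y⟫ := fun x y => hA.isSymmetric x y
  have hσcont : ContinuousOn σ (Set.Icc ε 1) :=
    fun r hr => (hderiv r hr).continuousAt.continuousWithinAt
  set f : ℝ → ℝ := fun r => ‖σ' r + (1 / r) • A (σ r)‖ ^ 2 with hf
  set g : ℝ → ℝ := fun r => (1 / r) * ⟪σ r, A (σ r)⟫ with hgdef
  set h : ℝ → ℝ := fun r => ‖σ' r‖ ^ 2 + (1 / r ^ 2) * ⟪σ r, A (σ r) + A (A (σ r))⟫ with hhdef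
  set g' : ℝ → ℝ := fun r =>
    (-(1 / r ^ 2)) * ⟪σ r, A (σ r)⟫ + (1 / r) * (2 * ⟪σ' r, A (σ r)⟫) with hg'def
  have hsub : Set.Icc r₀ 1 ⊆ Set.Icc ε 1 := Set.Icc_subset_Icc hr₀.1 le_rfl
  have hne : ∀ r ∈ Set.Icc ε 1, r ≠ 0 := fun r hr => ne_of_gt (lt_of_lt_of_le hε hr.1)
  -- derivative of g
  have hgderiv : ∀ r ∈ Set.Icc ε 1, HasDerivAt g (g' r) r := by
    intro r hr
    have h1 : HasDerivAt (fun r : ℝ => (1 : ℝ) / r) (-(1 / r ^ 2)) r := by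
      simpa [one_div, pow_two] using (hasDerivAt_inv (hne r hr))
    have h2 : HasDerivAt (fun r => A (σ r)) (A (σ' r)) r :=
      (A.hasFDerivAt.comp_hasDerivAt r (hderiv r hr))
    have h3 : HasDerivAt (fun r => ⟪σ r, A (σ r)⟫)
        (⟪σ r, A (σ' r)⟫ + ⟪σ' r, A (σ r)⟫) r :=
      HasDerivAt.inner ℝ (hderiv r hr) h2
    have := h1.mul h3
    refine this.congr_deriv ?_
    have : ⟪σ r, A (σ' r)⟫ = ⟪σ' r, A (σ r)⟫ := by
      rw [← hsym (σ' r) (σ r), real_inner_comm]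
    simp only [hg'def, this]
    ring
  -- pointwise identity f = h + g'
  have hfh : ∀ r ∈ Set.Icc ε 1, f r = h r + g' r := by
    intro r hr
    have hr0 : r ≠ 0 := hne r hr
    have expand : f r = ‖σ' r‖ ^ 2 + 2 * ((1 / r) * ⟪σ' r, A (σ r)⟫)
        + (1 / r) ^ 2 * ‖A (σ r)‖ ^ 2 := by
      simp only [hf]
      rw [← real_inner_self_eq_norm_sq, ← real_inner_self_eq_norm_sq,
        ← real_inner_self_eq_norm_sq]
      rw [inner_add_add_self]
      simp only [real_inner_smul_left, real_inner_smul_right,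
        real_inner_comm (A (σ r)) (σ' r), one_div]
      ring
    have hAA : ‖A (σ r)‖ ^ 2 = ⟪σ r, A (A (σ r))⟫ := by
      rw [← real_inner_self_eq_norm_sq, hsym]
    rw [expand, hAA]
    simp only [hhdef, hg'def, inner_add_right]
    field_simp
    ring
  -- nonnegativity
  have hfnn : ∀ r, 0 ≤ f r := fun r => sq_nonneg _
  have hhnn : ∀ r ∈ Set.Icc ε 1, 0 ≤ h r := by
    intro r hr
    have : (0:ℝ) ≤ 1 / r ^ 2 := by positivity
    exact add_nonneg (sq_nonneg _) (mul_nonneg this (hpos (σ r)))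
  -- continuity of relevant functions on Icc ε 1
  have hAcont : ContinuousOn (fun r => A (σ r)) (Set.Icc ε 1) :=
    A.continuous.comp_continuousOn hσcont
  have hinv : ContinuousOn (fun r : ℝ => 1 / r) (Set.Icc ε 1) :=
    ContinuousOn.div continuousOn_const continuousOn_id hne
  have hfcont : ContinuousOn f (Set.Icc ε 1) := by
    apply ContinuousOn.pow
    exact (hcont.add (hinv.smul hAcont)).norm
  have hhcont : ContinuousOn h (Set.Icc ε 1) := by
    apply ContinuousOn.add
    · exact (hcont.norm).pow 2
    · apply ContinuousOn.mul
      · exact ContinuousOn.div continuousOn_const (continuousOn_pow 2)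
          (fun r hr => pow_ne_zero 2 (hne r hr))
      · exact hσcont.inner (hAcont.add (A.continuous.comp_continuousOn hAcont))
  -- integrability on subintervals
  have huIcc : Set.uIcc r₀ (1:ℝ) ⊆ Set.Icc ε 1 := by
    rw [Set.uIcc_of_le hr₀.2]; exact hsub
  have huIcc2 : Set.uIcc ε r₀ ⊆ Set.Icc ε 1 := by
    rw [Set.uIcc_of_le hr₀.1]; exact Set.Icc_subset_Icc le_rfl hr₀.2
  have hfint1 : IntervalIntegrable f MeasureTheory.volume r₀ 1 :=
    (hfcont.mono huIcc).intervalIntegrable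
  have hfint2 : IntervalIntegrable f MeasureTheory.volume ε r₀ :=
    (hfcont.mono huIcc2).intervalIntegrable
  have hhint1 : IntervalIntegrable h MeasureTheory.volume r₀ 1 :=
    (hhcont.mono huIcc).intervalIntegrable
  have hg'int1 : IntervalIntegrable g' MeasureTheory.volume r₀ 1 := by
    have : IntervalIntegrable (fun r => f r - h r) MeasureTheory.volume r₀ 1 :=
      hfint1.sub hhint1
    apply this.congr
    intro r hr
    have hr' : r ∈ Set.Icc ε 1 := huIcc (Set.uIoc_subset_uIcc hr)
    show f r - h r = g' r
    rw [hfh r hr']; ring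
  -- FTC on [r₀, 1]
  have hftc : ∫ r in r₀..1, g' r = g 1 - g r₀ :=
    intervalIntegral.integral_eq_sub_of_hasDerivAt
      (fun r hr => hgderiv r (by first | exact hsub hr | exact huIcc hr)) hg'int1
  have hg1 : g 1 = 0 := by simp [hgdef, hb]
  -- split the integral
  have hsplit : ∫ r in r₀..1, f r = (∫ r in r₀..1, h r) + ∫ r in r₀..1, g' r := by
    rw [← intervalIntegral.integral_add hhint1 hg'int1]
    apply intervalIntegral.integral_congr
    intro r hr
    exact hfh r (by first | exact hsub hr | exact huIcc hr)
  have hhint_nn : 0 ≤ ∫ r in r₀..1, h r := by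
    apply intervalIntegral.integral_nonneg hr₀.2
    intro r hr
    exact hhnn r (hsub hr)
  have key : -(g r₀) ≤ ∫ r in r₀..1, f r := by
    rw [hsplit, hftc, hg1]
    linarith
  have hmono : ∫ r in r₀..1, f r ≤ ∫ r in ε..1, f r := by
    rw [← intervalIntegral.integral_add_adjacent_intervals hfint2 hfint1]
    have : 0 ≤ ∫ r in ε..r₀, f r :=
      intervalIntegral.integral_nonneg hr₀.1 (fun r _ => hfnn r)
    linarith
  have : (1 / r₀) * ⟪σ r₀, -A (σ r₀)⟫ = -(g r₀) := by
    simp only [hgdef, inner_neg_right]; ring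
  rw [this]
  calc -(g r₀) ≤ ∫ r in r₀..1, f r := key
    _ ≤ ∫ r in ε..1, f r := hmono
    _ ≤ Λ := hq
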